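/- arXiv:2204.05913 — 2 statements merged into one kernel-verified Lean document; each statement's English description precedes it below -/
import Mathlib

section
/- For pure octonions a, b, x, the associator satisfies {a,x,b} = (1/2) x*(a*b) + ⟨a,x⟩b - ⟨b,x⟩a, where {a,x,b} = (ax)b - a(xb). -/
/-- An octonion algebra over `k`: an 8-dimensional unital (not necessarily associative)
`k`-algebra with a nondegenerate multiplicative quadratic form `N`. -/
structure OctonionAlgebra (k : Type) [Field k] (A : Type) [AddCommGroup A] [Module k A] where
  mul : A → A → A
  e : A
  N : A → k
  add_mul' : ∀ a b c : A, mul (a + b) c = mul a c + mul b c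
  mul_add' : ∀ a b c : A, mul a (b + c) = mul a b + mul a c
  smul_mul' : ∀ (t : k) (a b : A), mul (t • a) b = t • mul a b
  mul_smul' : ∀ (t : k) (a b : A), mul a (t • b) = t • mul a b
  one_mul' : ∀ a : A, mul e a = a
  mul_one' : ∀ a : A, mul a e = a
  dim_eq : Module.finrank k A = 8
  N_smul : ∀ (t : k) (a : A), N (t • a) = t ^ 2 * N a
  polar_add_left : ∀ a b c : A,
    N (a + b + c) - N (a + b) - N c = (N (a + c) - N a - N c) + (N (b + c) - N b - N c)
  polar_smul_left : ∀ (t : k) (a b : A),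
    N (t • a + b) - N (t • a) - N b = t * (N (a + b) - N a - N b)
  nondeg : ∀ a : A, (∀ b : A, N (a + b) - N a - N b = 0) → a = 0
  N_mul : ∀ a b : A, N (mul a b) = N a * N b

namespace OctonionAlgebra

variable {k : Type} [Field k] {A : Type} [AddCommGroup A] [Module k A]

/-- The bilinear form associated to the norm: `⟨x,y⟩ = N(x+y) - N(x) - N(y)`. -/
def inner (O : OctonionAlgebra k A) (x y : A) : k := O.N (x + y) - O.N x - O.N y

/-- The standard involution `x̄ = ⟨x,e⟩e - x`. -/
def conj (O : OctonionAlgebra k A) (x : A) : A := O.inner x O.e • O.e - x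

/-- The Malcev product `a*b = ab - ba`. -/
def malcev (O : OctonionAlgebra k A) (a b : A) : A := O.mul a b - O.mul b a

/-- The associator `{a,x,b} = (ax)b - a(xb)`. -/
def assoc (O : OctonionAlgebra k A) (a x b : A) : A :=
  O.mul (O.mul a x) b - O.mul a (O.mul x b)

/-- The standard derivation `D_{a,b} = [L_a,L_b] + [L_a,R_b] + [R_a,R_b]`, as a function. -/
def D (O : OctonionAlgebra k A) (a b x : A) : A :=
  O.mul a (O.mul b x) - O.mul b (O.mul a x)
  + O.mul a (O.mul x b) - O.mul (O.mul a x) b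
  + O.mul (O.mul x b) a - O.mul (O.mul x a) b

end OctonionAlgebra

namespace OctonionAlgebra

variable {k : Type} [Field k] {A : Type} [AddCommGroup A] [Module k A]

variable (O : OctonionAlgebra k A)

lemma inner_comm (x y : A) : O.inner x y = O.inner y x := by
  unfold inner; rw [add_comm]; ring

lemma inner_add_left (a b c : A) : O.inner (a + b) c = O.inner a c + O.inner b c :=
  O.polar_add_left a b c

lemma inner_smul_left (t : k) (a b : A) : O.inner (t • a) b = t * O.inner a b :=
  O.polar_smul_left t a b

lemma inner_add_right (a b c : A) : O.inner a (b + c) = O.inner a b + O.inner a c := by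
  rw [O.inner_comm, O.inner_add_left, O.inner_comm b, O.inner_comm c]

lemma inner_smul_right (t : k) (a b : A) : O.inner a (t • b) = t * O.inner a b := by
  rw [O.inner_comm, O.inner_smul_left, O.inner_comm]

lemma inner_neg_left (a b : A) : O.inner (-a) b = -O.inner a b := by
  rw [← neg_one_smul k a, O.inner_smul_left]; ring

lemma inner_sub_left (a b c : A) : O.inner (a - b) c = O.inner a c - O.inner b c := by
  rw [sub_eq_add_neg, O.inner_add_left, O.inner_neg_left]; ring

lemma ext_zero {d : A} (h : ∀ c : A, O.inner d c = 0) : d = 0 :=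
  O.nondeg d h

lemma N_add (a b : A) : O.N (a + b) = O.N a + O.N b + O.inner a b := by
  unfold inner; ring

lemma inner_mul_left (u v w : A) :
    O.inner (O.mul u v) (O.mul u w) = O.N u * O.inner v w := by
  have h := O.N_mul u (v + w)
  rw [O.mul_add'] at h
  have h1 := O.N_mul u v
  have h2 := O.N_mul u w
  have hvw := O.N_add v w
  have hm := O.N_add (O.mul u v) (O.mul u w)
  linear_combination h - h1 - h2 + O.N u * hvw - hm

lemma inner_mul_right (u w s : A) :
    O.inner (O.mul u s) (O.mul w s) = O.inner u w * O.N s := by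
  have h := O.N_mul (u + w) s
  rw [O.add_mul'] at h
  have h1 := O.N_mul u s
  have h2 := O.N_mul w s
  have huw := O.N_add u w
  have hm := O.N_add (O.mul u s) (O.mul w s)
  linear_combination h - h1 - h2 + O.N s * huw - hm

lemma exch_right (u v w z : A) :
    O.inner (O.mul u v) (O.mul w z) + O.inner (O.mul u z) (O.mul w v)
      = O.inner u w * O.inner v z := by
  have h := O.inner_mul_right u w (v + z)
  rw [O.mul_add', O.mul_add'] at h
  simp only [O.inner_add_left, O.inner_add_right] at h
  have h1 := O.inner_mul_right u w v
  have h2 := O.inner_mul_right u w z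
  have hvz := O.N_add v z
  linear_combination h - h1 - h2 + O.inner u w * hvz

lemma exch_left (u v w z : A) :
    O.inner (O.mul u v) (O.mul w z) + O.inner (O.mul w v) (O.mul u z)
      = O.inner u w * O.inner v z := by
  have h := O.inner_mul_left (u + w) v z
  rw [O.add_mul', O.add_mul'] at h
  simp only [O.inner_add_left, O.inner_add_right] at h
  have h1 := O.inner_mul_left u v z
  have h2 := O.inner_mul_left w v z
  have huw := O.N_add u w
  linear_combination h - h1 - h2 + O.inner v z * huw

lemma move_right (u v w : A) :
    O.inner (O.mul u v) w = O.inner u w * O.inner v O.e - O.inner u (O.mul w v) := by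
  have h := O.exch_right u v w O.e
  rw [O.mul_one', O.mul_one'] at h
  linear_combination h

lemma move_left (u v w : A) :
    O.inner (O.mul u v) w = O.inner u O.e * O.inner v w - O.inner v (O.mul u w) := by
  have h := O.exch_left u v O.e w
  rw [O.one_mul', O.one_mul'] at h
  linear_combination h

lemma sq_eq (x : A) : O.mul x x = O.inner x O.e • x - O.N x • O.e := by
  rw [← sub_eq_zero]
  apply O.ext_zero
  intro c
  rw [O.inner_sub_left, O.inner_sub_left, O.inner_smul_left, O.inner_smul_left]
  have m1 := O.move_right x x c
  have m2 := O.inner_mul_right O.e c x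
  rw [O.one_mul'] at m2
  linear_combination m1 - m2

lemma anticomm (a b : A) :
    O.mul a b + O.mul b a
      = O.inner a O.e • b + O.inner b O.e • a - O.inner a b • O.e := by
  have h : O.mul (a + b) (a + b) = O.mul a a + O.mul a b + (O.mul b a + O.mul b b) := by
    rw [O.add_mul', O.mul_add', O.mul_add']
  rw [O.sq_eq, O.sq_eq, O.sq_eq, O.N_add, O.inner_add_left] at h
  linear_combination (norm := module) -h

lemma mul_sub_right (a b c : A) : O.mul a (b - c) = O.mul a b - O.mul a c := by
  rw [sub_eq_add_neg, ← neg_one_smul k c, O.mul_add', O.mul_smul', neg_one_smul,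
    ← sub_eq_add_neg]

lemma sub_mul_left (a b c : A) : O.mul (a - b) c = O.mul a c - O.mul b c := by
  rw [sub_eq_add_neg, ← neg_one_smul k b, O.add_mul', O.smul_mul', neg_one_smul,
    ← sub_eq_add_neg]

end OctonionAlgebra

/-- For pure octonions `a, b, x`:
`{a,x,b} = (1/2) x*(a*b) + ⟨a,x⟩b - ⟨b,x⟩a`. -/
theorem stmt2 {k A : Type} [Field k] [AddCommGroup A] [Module k A]
    (h2 : (2 : k) ≠ 0) (O : OctonionAlgebra k A) :
    ∀ a b x : A, O.inner a O.e = 0 → O.inner b O.e = 0 → O.inner x O.e = 0 →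
      O.assoc a x b
        = (2 : k)⁻¹ • O.malcev x (O.malcev a b) + O.inner a x • b - O.inner b x • a := by
  intro a b x ha hb hx
  rw [← sub_eq_zero]
  apply O.ext_zero
  intro c
  simp only [OctonionAlgebra.assoc, OctonionAlgebra.malcev, O.mul_sub_right, O.sub_mul_left,
    O.inner_sub_left, O.inner_add_left, O.inner_smul_left]
  have h1 := O.move_right (O.mul a x) b c
  rw [hb, mul_zero, zero_sub] at h1
  have hml2 := O.move_left a (O.mul x b) c
  rw [ha, zero_mul, zero_sub] at hml2
  have h3 := O.move_left x (O.mul a b) c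
  rw [hx, zero_mul, zero_sub] at h3
  have h4 := O.move_left x (O.mul b a) c
  rw [hx, zero_mul, zero_sub] at h4
  have h5 := O.move_right (O.mul a b) x c
  rw [hx, mul_zero, zero_sub] at h5
  have h6 := O.move_right (O.mul b a) x c
  rw [hx, mul_zero, zero_sub] at h6
  rw [h1, hml2, h3, h4, h5, h6]
  have r1 := O.exch_right a x c b
  have r2 := O.exch_left x b a c
  -- the anticommutation consequence
  have hab := O.anticomm a b
  rw [ha, hb, zero_smul, zero_smul, zero_add, zero_sub] at hab
  have he1 : O.inner (O.mul x c) O.e = -O.inner c x := by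
    have := O.move_left x c O.e
    rw [hx, zero_mul, zero_sub, O.mul_one'] at this
    exact this
  have he2 : O.inner (O.mul c x) O.e = -O.inner c x := by
    have := O.move_right c x O.e
    rw [hx, mul_zero, zero_sub, O.one_mul'] at this
    exact this
  have h34 : O.inner (O.mul a b) (O.mul x c) + O.inner (O.mul b a) (O.mul x c)
      = O.inner (O.mul a b) (O.mul c x) + O.inner (O.mul b a) (O.mul c x) := by
    have t1 : O.inner (O.mul a b + O.mul b a) (O.mul x c)
        = -(O.inner a b * O.inner (O.mul x c) O.e) := by
      rw [hab, O.inner_neg_left, O.inner_smul_left, O.inner_comm O.e]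
    have t2 : O.inner (O.mul a b + O.mul b a) (O.mul c x)
        = -(O.inner a b * O.inner (O.mul c x) O.e) := by
      rw [hab, O.inner_neg_left, O.inner_smul_left, O.inner_comm O.e]
    rw [O.inner_add_left] at t1 t2
    rw [he1] at t1; rw [he2] at t2
    linear_combination t1 - t2
  have s1 : O.inner x b = O.inner b x := O.inner_comm x b
  have s2 : O.inner x a = O.inner a x := O.inner_comm x a
  field_simp
  linear_combination (2:k) * r2 - (2:k) * r1 - h34 - (2:k) * O.inner a c * s1
    + (2:k) * O.inner b c * s2
end

section
/- Let B be an orthonormal basis (with respect to the trace form) of the trace-zero part W of an Albert algebra over an algebraically closed field, with projected product *. Assume ∑_{x∈B} x*x = 0. Then for all a, c ∈ W: ∑_{x∈B} (a*x)*(c*x) + a*c = 0. -/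
structure AlbertAlgebra (k : Type) [Field k] (A : Type) [AddCommGroup A] [Module k A] where
  mul : A → A → A
  e : A
  inner : A → A → k
  tri : A → A → A → k
  mul_comm' : ∀ a b : A, mul a b = mul b a
  add_mul' : ∀ a b c : A, mul (a + b) c = mul a c + mul b c
  smul_mul' : ∀ (t : k) (a b : A), mul (t • a) b = t • mul a b
  one_mul' : ∀ a : A, mul e a = a
  inner_comm' : ∀ a b : A, inner a b = inner b a
  inner_add_left : ∀ a b c : A, inner (a + b) c = inner a c + inner b c
  inner_smul_left : ∀ (t : k) (a b : A), inner (t • a) b = t * inner a b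
  nondeg : ∀ a : A, (∀ b : A, inner a b = 0) → a = 0
  inner_assoc : ∀ x y z : A, inner (mul x y) z = inner x (mul y z)
  jordan : ∀ x y : A, mul (mul x y) (mul x x) = mul x (mul y (mul x x))
  tri_add_left : ∀ a a' b c : A, tri (a + a') b c = tri a b c + tri a' b c
  tri_smul_left : ∀ (t : k) (a b c : A), tri (t • a) b c = t * tri a b c
  tri_comm₁ : ∀ a b c : A, tri a b c = tri b a c
  tri_comm₂ : ∀ a b c : A, tri a b c = tri a c b
  dim_eq : Module.finrank k A = 27
  inner_e_e : inner e e = 3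
  cube : ∀ x : A, mul x (mul x x)
    = inner x e • mul x x
      + ((2 : k)⁻¹ * (inner x x - inner x e * inner x e)) • x
      + tri x x x • e

namespace AlbertAlgebra

variable {k : Type} [Field k] {A : Type} [AddCommGroup A] [Module k A]

/-- The standard derivation `D_{a,b} = [L_a,L_b]` of a Jordan algebra, as a function. -/
def D (J : AlbertAlgebra k A) (a b x : A) : A := J.mul a (J.mul b x) - J.mul b (J.mul a x)

/-- Projection to the trace-zero part along the unit: `π(a) = a - (⟨a,e⟩/3)e`. -/
def proj (J : AlbertAlgebra k A) (a : A) : A := a - ((3 : k)⁻¹ * J.inner a J.e) • J.e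

/-- The projected Jordan product on the trace-zero part: `x*y = π(x·y)`. -/
def star (J : AlbertAlgebra k A) (x y : A) : A := J.proj (J.mul x y)

end AlbertAlgebra

namespace AlbertHelper
open AlbertAlgebra

variable {k : Type} [Field k] {A : Type} [AddCommGroup A] [Module k A] (J : AlbertAlgebra k A)

lemma mul_add_right (a b c : A) : J.mul a (b + c) = J.mul a b + J.mul a c := by
  rw [J.mul_comm', J.add_mul', J.mul_comm' b, J.mul_comm' c]

lemma mul_smul_right (t : k) (a b : A) : J.mul a (t • b) = t • J.mul a b := by
  rw [J.mul_comm', J.smul_mul', J.mul_comm']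

lemma inner_add_right (a b c : A) : J.inner a (b + c) = J.inner a b + J.inner a c := by
  rw [J.inner_comm', J.inner_add_left, J.inner_comm' b, J.inner_comm' c]

lemma inner_smul_right (t : k) (a b : A) : J.inner a (t • b) = t * J.inner a b := by
  rw [J.inner_comm', J.inner_smul_left, J.inner_comm']

lemma mul_e_right (a : A) : J.mul a J.e = a := by rw [J.mul_comm', J.one_mul']

lemma inner_mul_e (a b : A) : J.inner (J.mul a b) J.e = J.inner a b := by
  rw [J.inner_assoc, mul_e_right]

lemma inner_e_mul (a b : A) : J.inner J.e (J.mul a b) = J.inner a b := by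
  rw [J.inner_comm', inner_mul_e]

lemma inner_zero_right (a : A) : J.inner a 0 = 0 := by
  have := inner_smul_right J (0:k) a 0
  simpa using this

lemma proj_add (x y : A) : J.proj (x + y) = J.proj x + J.proj y := by
  unfold AlbertAlgebra.proj
  rw [J.inner_add_left]
  module

lemma proj_smul (t : k) (x : A) : J.proj (t • x) = t • J.proj x := by
  unfold AlbertAlgebra.proj
  rw [J.inner_smul_left]
  module

lemma proj_of_trace {x : A} (hx : J.inner x J.e = 0) : J.proj x = x := by
  unfold AlbertAlgebra.proj
  rw [hx]
  module

lemma proj_e (h3 : (3:k) ≠ 0) : J.proj J.e = 0 := by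
  unfold AlbertAlgebra.proj
  rw [J.inner_e_e]
  rw [mul_comm, mul_inv_cancel₀ h3]
  module

lemma inner_sub_left (a b c : A) : J.inner (a - b) c = J.inner a c - J.inner b c := by
  have h : a - b = a + (-1:k) • b := by module
  rw [h, J.inner_add_left, J.inner_smul_left]; ring

lemma inner_sub_right (a b c : A) : J.inner a (b - c) = J.inner a b - J.inner a c := by
  rw [J.inner_comm', inner_sub_left, J.inner_comm' b, J.inner_comm' c]

lemma proj_trace (h3 : (3:k) ≠ 0) (x : A) : J.inner (J.proj x) J.e = 0 := by
  unfold AlbertAlgebra.proj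
  rw [inner_sub_left, J.inner_smul_left, J.inner_e_e]
  field_simp
  ring

lemma star_comm (x y : A) : J.star x y = J.star y x := by
  unfold AlbertAlgebra.star; rw [J.mul_comm']

lemma star_trace (h3 : (3:k) ≠ 0) (x y : A) : J.inner (J.star x y) J.e = 0 :=
  proj_trace J h3 _

lemma star_eq (x y : A) : J.star x y = J.mul x y - ((3:k)⁻¹ * J.inner x y) • J.e := by
  unfold AlbertAlgebra.star AlbertAlgebra.proj
  rw [inner_mul_e]

lemma star_add_left (x y z : A) : J.star (x + y) z = J.star x z + J.star y z := by
  unfold AlbertAlgebra.star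
  rw [J.add_mul', proj_add]

lemma star_add_right (x y z : A) : J.star x (y + z) = J.star x y + J.star x z := by
  unfold AlbertAlgebra.star
  rw [mul_add_right, proj_add]

lemma star_smul_left (t : k) (x y : A) : J.star (t • x) y = t • J.star x y := by
  unfold AlbertAlgebra.star
  rw [J.smul_mul', proj_smul]

lemma star_smul_right (t : k) (x y : A) : J.star x (t • y) = t • J.star x y := by
  unfold AlbertAlgebra.star
  rw [mul_smul_right, proj_smul]

lemma star_zero_right (x : A) : J.star x 0 = 0 := by
  have := star_smul_right J (0:k) x 0
  simpa using this

lemma star_adjoint {x z : A} (hx : J.inner x J.e = 0) (hz : J.inner z J.e = 0) (y : A) :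
    J.inner (J.star x y) z = J.inner x (J.star y z) := by
  rw [star_eq, star_eq, inner_sub_left, inner_sub_right, J.inner_smul_left,
    inner_smul_right, J.inner_comm' J.e z, hz, hx, J.inner_assoc]
  ring

lemma cubeW (h2 : (2:k) ≠ 0) (h3 : (3:k) ≠ 0) {x : A} (hx : J.inner x J.e = 0) :
    (2:k) • J.proj (J.mul x (J.mul x x)) = J.inner x x • x := by
  rw [J.cube, proj_add, proj_add, proj_smul, proj_smul, proj_smul,
    proj_of_trace J hx, proj_e J h3, hx]
  rw [smul_zero, zero_smul]
  match_scalars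
  field_simp
  ring

lemma polar3 (h2 : (2:k) ≠ 0) (h3 : (3:k) ≠ 0) {a c d : A} (ha : J.inner a J.e = 0)
    (hc : J.inner c J.e = 0) (hd : J.inner d J.e = 0) :
    (4:k) • (J.proj (J.mul a (J.mul c d)) + J.proj (J.mul c (J.mul a d))
        + J.proj (J.mul d (J.mul a c)))
    = (2:k) • (J.inner c d • a + J.inner a d • c + J.inner a c • d) := by
  have E1 := cubeW J h2 h3 (x := a + c + d)
    (by rw [J.inner_add_left, J.inner_add_left, ha, hc, hd]; ring)
  have E2 := cubeW J h2 h3 (x := a + c) (by rw [J.inner_add_left, ha, hc]; ring)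
  have E3 := cubeW J h2 h3 (x := a + d) (by rw [J.inner_add_left, ha, hd]; ring)
  have E4 := cubeW J h2 h3 (x := c + d) (by rw [J.inner_add_left, hc, hd]; ring)
  have E5 := cubeW J h2 h3 ha
  have E6 := cubeW J h2 h3 hc
  have E7 := cubeW J h2 h3 hd
  simp only [J.add_mul', mul_add_right, proj_add, J.inner_add_left, inner_add_right,
    J.mul_comm', J.inner_comm'] at E1 E2 E3 E4 E5 E6 E7 ⊢
  linear_combination (norm := module) E1 - E2 - E3 - E4 + E5 + E6 + E7

lemma star_sub_right (x y z : A) : J.star x (y - z) = J.star x y - J.star x z := by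
  have h : y - z = y + (-1:k) • z := by module
  rw [h, star_add_right, star_smul_right]; module

lemma star_e_right {a : A} (ha : J.inner a J.e = 0) : J.star a J.e = a := by
  show J.proj (J.mul a J.e) = a
  rw [mul_e_right, proj_of_trace J ha]

lemma star_star (h3 : (3:k) ≠ 0) {a : A} (ha : J.inner a J.e = 0) (c d : A) :
    (3:k) • J.star a (J.star c d)
      = (3:k) • J.proj (J.mul a (J.mul c d)) - J.inner c d • a := by
  rw [star_eq J c d, star_sub_right, star_smul_right, star_e_right J ha]
  have hh : J.star a (J.mul c d) = J.proj (J.mul a (J.mul c d)) := rfl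
  rw [hh]
  match_scalars <;> (field_simp; try ring)

lemma dagger (h2 : (2:k) ≠ 0) (h3 : (3:k) ≠ 0) {a c d : A} (ha : J.inner a J.e = 0)
    (hc : J.inner c J.e = 0) (hd : J.inner d J.e = 0) :
    (12:k) • (J.star a (J.star c d) + J.star c (J.star a d) + J.star d (J.star a c))
      = (2:k) • (J.inner c d • a + J.inner a d • c + J.inner a c • d) := by
  have S1 := star_star J h3 ha c d
  have S2 := star_star J h3 hc a d
  have S3 := star_star J h3 hd a c
  have hp := polar3 J h2 h3 ha hc hd
  linear_combination (norm := module) (4:k) • S1 + (4:k) • S2 + (4:k) • S3 + (3:k) • hp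

lemma smul_cancel {t : k} (ht : t ≠ 0) {x y : A} (h : t • x = t • y) : x = y := by
  have := congrArg (fun z => t⁻¹ • z) h
  simpa [smul_smul, inv_mul_cancel₀ ht] using this

lemma inner_sum_left {ι : Type*} (s : Finset ι) (f : ι → A) (w : A) :
    J.inner (∑ i ∈ s, f i) w = ∑ i ∈ s, J.inner (f i) w :=
  map_sum (AddMonoidHom.mk' (fun v => J.inner v w) (fun x y => J.inner_add_left x y w)) f s

lemma inner_sum_right {ι : Type*} (s : Finset ι) (f : ι → A) (w : A) :
    J.inner w (∑ i ∈ s, f i) = ∑ i ∈ s, J.inner w (f i) :=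
  map_sum (AddMonoidHom.mk' (fun v => J.inner w v) (fun x y => inner_add_right J w x y)) f s

lemma star_sum_right {ι : Type*} (s : Finset ι) (f : ι → A) (w : A) :
    J.star w (∑ i ∈ s, f i) = ∑ i ∈ s, J.star w (f i) :=
  map_sum (AddMonoidHom.mk' (fun v => J.star w v) (fun x y => star_add_right J w x y)) f s

end AlbertHelper

open AlbertHelper in
private theorem stmt18_aux {k A : Type} [Field k] [AddCommGroup A] [Module k A]
    (h2 : (2 : k) ≠ 0) (h3 : (3 : k) ≠ 0) (J : AlbertAlgebra k A)
    (b : Fin 26 → A)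
    (hpure : ∀ i, J.inner (b i) J.e = 0)
    (horth : ∀ i j, J.inner (b i) (b j) = if i = j then 1 else 0)
    (hspan : ∀ x : A, J.inner x J.e = 0 → x ∈ Submodule.span k (Set.range b))
    (hsum : ∑ i : Fin 26, J.star (b i) (b i) = 0) :
    ∀ a c : A, J.inner a J.e = 0 → J.inner c J.e = 0 →
      (∑ i : Fin 26, J.star (J.star a (b i)) (J.star c (b i))) + J.star a c = 0 := by
  classical
  -- Parseval
  have parseval : ∀ u : A, J.inner u J.e = 0 → ∑ i : Fin 26, J.inner u (b i) • b i = u := by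
    intro u hu
    set v := ∑ i : Fin 26, J.inner u (b i) • b i with hv
    have hbase : ∀ j, J.inner (u - v) (b j) = 0 := by
      intro j
      rw [AlbertHelper.inner_sub_left, hv, AlbertHelper.inner_sum_left]
      have : ∀ i : Fin 26, J.inner (J.inner u (b i) • b i) (b j)
          = if i = j then J.inner u (b j) else 0 := by
        intro i
        rw [J.inner_smul_left, horth]
        by_cases h : i = j <;> simp [h]
      rw [Finset.sum_congr rfl (fun i _ => this i), Finset.sum_ite_eq' Finset.univ j]
      simp
    have hve : J.inner (u - v) J.e = 0 := by
      rw [AlbertHelper.inner_sub_left, hu, hv, AlbertHelper.inner_sum_left]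
      have : ∀ i : Fin 26, J.inner (J.inner u (b i) • b i) J.e = 0 := by
        intro i; rw [J.inner_smul_left, hpure i, mul_zero]
      rw [Finset.sum_congr rfl (fun i _ => this i)]
      simp
    have hspanzero : ∀ w ∈ Submodule.span k (Set.range b), J.inner (u - v) w = 0 := by
      intro w hw
      induction hw using Submodule.span_induction with
      | mem x h => obtain ⟨j, rfl⟩ := h; exact hbase j
      | zero => exact AlbertHelper.inner_zero_right J _
      | add x y hx hy ihx ihy => rw [AlbertHelper.inner_add_right, ihx, ihy, add_zero]
      | smul t x hx ihx => rw [AlbertHelper.inner_smul_right, ihx, mul_zero]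
    have hzero : u - v = 0 := by
      apply J.nondeg
      intro w
      have hw : w = (w - ((3 : k)⁻¹ * J.inner w J.e) • J.e)
          + ((3 : k)⁻¹ * J.inner w J.e) • J.e := by module
      rw [hw, AlbertHelper.inner_add_right, AlbertHelper.inner_smul_right, hve, mul_zero, add_zero]
      apply hspanzero
      apply hspan
      rw [AlbertHelper.inner_sub_left, J.inner_smul_left, J.inner_e_e]
      field_simp
      ring
    have := sub_eq_zero.mp hzero
    exact this.symm
  -- the "7/3" lemma
  have Qlem : ∀ m : A, J.inner m J.e = 0 →
      (3 : k) • ∑ i : Fin 26, J.star (J.star m (b i)) (b i) = (7 : k) • m := by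
    intro m hm
    have inst : ∀ i : Fin 26, (12 : k) • (J.star m (J.star (b i) (b i))
          + J.star (J.star m (b i)) (b i) + J.star (J.star m (b i)) (b i))
        = (2 : k) • (J.inner (b i) (b i) • m + J.inner m (b i) • b i
          + J.inner m (b i) • b i) := by
      intro i
      have hd := AlbertHelper.dagger J h2 h3 hm (hpure i) (hpure i)
      rw [AlbertHelper.star_comm J (b i) (J.star m (b i))] at hd
      exact hd
    have EQ := Finset.sum_congr rfl (fun i (_ : i ∈ Finset.univ) => inst i)
    simp only [← Finset.smul_sum, Finset.sum_add_distrib] at EQ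
    rw [← AlbertHelper.star_sum_right, hsum, AlbertHelper.star_zero_right] at EQ
    have e2 : ∑ i : Fin 26, J.inner (b i) (b i) • m = (26 : k) • m := by
      have : ∀ i : Fin 26, J.inner (b i) (b i) • m = (1 : k) • m := by
        intro i; rw [horth]; simp
      rw [Finset.sum_congr rfl (fun i _ => this i), Finset.sum_const]
      simp
      match_scalars
      norm_num
    have e3 : ∑ i : Fin 26, J.inner m (b i) • b i = m := parseval m hm
    rw [e2, e3] at EQ
    have h8 : (8 : k) ≠ 0 := by
      have h : (8 : k) = 2 * 2 * 2 := by norm_num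
      rw [h]; exact mul_ne_zero (mul_ne_zero h2 h2) h2
    apply AlbertHelper.smul_cancel h8
    linear_combination (norm := module) EQ
  intro a c ha hc
  -- equation (A), generic in p, q
  have hA : ∀ p q : A, J.inner p J.e = 0 → J.inner q J.e = 0 →
      (12 : k) • (J.star p (∑ i : Fin 26, J.star (J.star q (b i)) (b i))
        + ∑ i : Fin 26, J.star (J.star p (b i)) (J.star q (b i))
        + ∑ i : Fin 26, J.star (J.star p (J.star q (b i))) (b i))
      = (2 : k) • (J.inner q (0:A) • p + J.star q p + J.star p q) := by
    intro p q hp hq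
    have inst : ∀ i : Fin 26,
        (12 : k) • (J.star p (J.star (J.star q (b i)) (b i))
          + J.star (J.star p (b i)) (J.star q (b i))
          + J.star (J.star p (J.star q (b i))) (b i))
        = (2 : k) • (J.inner q (J.star (b i) (b i)) • p
          + J.star q (J.inner p (b i) • b i)
          + J.inner (J.star p q) (b i) • b i) := by
      intro i
      have hd := AlbertHelper.dagger J h2 h3 hp
        (AlbertHelper.star_trace J h3 q (b i)) (hpure i)
      rw [AlbertHelper.star_comm J (J.star q (b i)) (J.star p (b i))] at hd
      rw [AlbertHelper.star_comm J (b i) (J.star p (J.star q (b i)))] at hd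
      rw [AlbertHelper.star_adjoint J hq (hpure i) (b i)] at hd
      rw [← AlbertHelper.star_adjoint J hp (hpure i) q] at hd
      rw [← AlbertHelper.star_smul_right J] at hd
      exact hd
    have EQ := Finset.sum_congr rfl (fun i (_ : i ∈ Finset.univ) => inst i)
    simp only [← Finset.smul_sum, Finset.sum_add_distrib, ← Finset.sum_smul] at EQ
    rw [← AlbertHelper.star_sum_right J] at EQ
    rw [← AlbertHelper.star_sum_right J] at EQ
    rw [← AlbertHelper.inner_sum_right J] at EQ
    rw [hsum] at EQ
    rw [parseval p hp] at EQ
    rw [parseval (J.star p q) (AlbertHelper.star_trace J h3 p q)] at EQ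
    exact EQ
  -- equation (B)
  have hB : (12 : k) • ((∑ i : Fin 26, J.star (J.star a (J.star c (b i))) (b i))
        + (∑ i : Fin 26, J.star (J.star c (J.star a (b i))) (b i))
        + ∑ i : Fin 26, J.star (J.star (J.star a c) (b i)) (b i))
      = (2 : k) • (J.star a c + J.star a c + J.inner a c • (0:A)) := by
    have inst : ∀ i : Fin 26,
        (12 : k) • (J.star (J.star a (J.star c (b i))) (b i)
          + J.star (J.star c (J.star a (b i))) (b i)
          + J.star (J.star (J.star a c) (b i)) (b i))
        = (2 : k) • (J.star a (J.inner c (b i) • b i)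
          + J.star c (J.inner a (b i) • b i)
          + J.inner a c • J.star (b i) (b i)) := by
      intro i
      have hd := AlbertHelper.dagger J h2 h3 ha hc (hpure i)
      have hd2 := congrArg (fun v => J.star v (b i)) hd
      simp only [AlbertHelper.star_smul_left, AlbertHelper.star_add_left] at hd2
      rw [AlbertHelper.star_comm J (b i) (J.star a c)] at hd2
      rw [show J.inner c (b i) • J.star a (b i) = J.star a (J.inner c (b i) • b i) from
        (AlbertHelper.star_smul_right J _ _ _).symm] at hd2
      rw [show J.inner a (b i) • J.star c (b i) = J.star c (J.inner a (b i) • b i) from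
        (AlbertHelper.star_smul_right J _ _ _).symm] at hd2
      rw [show J.inner a c • J.star (b i) (b i) = J.inner a c • J.star (b i) (b i) from rfl] at hd2
      exact hd2
    have EQ := Finset.sum_congr rfl (fun i (_ : i ∈ Finset.univ) => inst i)
    simp only [← Finset.smul_sum, Finset.sum_add_distrib] at EQ
    rw [← AlbertHelper.star_sum_right J] at EQ
    rw [← AlbertHelper.star_sum_right J] at EQ
    rw [parseval c hc, parseval a ha, hsum] at EQ
    rw [AlbertHelper.star_comm J c a] at EQ
    exact EQ
  have hAac := hA a c ha hc
  have hAca := hA c a hc ha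
  have hTT : ∑ i : Fin 26, J.star (J.star c (b i)) (J.star a (b i))
      = ∑ i : Fin 26, J.star (J.star a (b i)) (J.star c (b i)) :=
    Finset.sum_congr rfl (fun i _ => AlbertHelper.star_comm J _ _)
  rw [hTT, AlbertHelper.star_comm J c a] at hAca
  rw [AlbertHelper.star_comm J c a] at hAac
  have hXA : (3 : k) • J.star a (∑ i : Fin 26, J.star (J.star c (b i)) (b i))
      = (7 : k) • J.star a c := by
    rw [← AlbertHelper.star_smul_right J, Qlem c hc, AlbertHelper.star_smul_right J]
  have hXC : (3 : k) • J.star c (∑ i : Fin 26, J.star (J.star a (b i)) (b i))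
      = (7 : k) • J.star a c := by
    rw [← AlbertHelper.star_smul_right J, Qlem a ha, AlbertHelper.star_smul_right J,
      AlbertHelper.star_comm J c a]
  have hQm := Qlem (J.star a c) (AlbertHelper.star_trace J h3 a c)
  simp only [AlbertHelper.inner_zero_right, zero_smul, smul_zero, add_zero, zero_add]
    at hAac hAca hB
  have h24 : (24 : k) ≠ 0 := by
    have h : (24 : k) = 2 * 2 * 2 * 3 := by norm_num
    rw [h]; exact mul_ne_zero (mul_ne_zero (mul_ne_zero h2 h2) h2) h3
  apply AlbertHelper.smul_cancel h24
  rw [smul_zero]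
  linear_combination (norm := module) hAac + hAca - hB - (4 : k) • hXA - (4 : k) • hXC
    + (4 : k) • hQm

/-- Let `B` be an orthonormal basis (for the trace form) of the trace-zero part of an
Albert algebra over an algebraically closed field, with projected product `*`, such that
`∑_{x∈B} x*x = 0`. Then for all trace-zero `a, c`: `∑_{x∈B} (a*x)*(c*x) + a*c = 0`. -/
theorem stmt18 {k A : Type} [Field k] [IsAlgClosed k] [AddCommGroup A] [Module k A]
    (h2 : (2 : k) ≠ 0) (h3 : (3 : k) ≠ 0) (J : AlbertAlgebra k A)
    (b : Fin 26 → A)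
    (hpure : ∀ i, J.inner (b i) J.e = 0)
    (horth : ∀ i j, J.inner (b i) (b j) = if i = j then 1 else 0)
    (hspan : ∀ x : A, J.inner x J.e = 0 → x ∈ Submodule.span k (Set.range b))
    (hsum : ∑ i : Fin 26, J.star (b i) (b i) = 0) :
    ∀ a c : A, J.inner a J.e = 0 → J.inner c J.e = 0 →
      (∑ i : Fin 26, J.star (J.star a (b i)) (J.star c (b i))) + J.star a c = 0 :=
  stmt18_aux h2 h3 J b hpure horth hspan hsum
end
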